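/- (Power-constraint tightness, Theorem 1) Consider maximizing F(ρ, p) = (1/ρ)·log₂(1 + U p/(I+v)) over (ρ, p) subject to p + g(ρ)p₀ ≤ p_max, p ≥ 0, ρ_min ≤ ρ ≤ 1, where g is continuous and strictly decreasing, p₀ > 0, and g(ρ_min)p₀ ≥ p_max. Then at any maximizer (ρ*, p*) the power constraint is tight: p* + g(ρ*)p₀ = p_max. -/
import Mathlib


theorem stmt_5 (U I v p₀ pmax ρmin : ℝ)
    (hU : 0 < U) (hI : 0 ≤ I) (hv : 0 < v) (hp₀ : 0 < p₀) (hpmax : 0 < pmax)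
    (hρmin : ρmin ≤ 1)
    (g : ℝ → ℝ) (hgc : ContinuousOn g (Set.Icc ρmin 1))
    (hganti : StrictAntiOn g (Set.Icc ρmin 1))
    (hgmin : g ρmin * p₀ ≥ pmax)
    (F : ℝ → ℝ → ℝ)
    (hF : ∀ ρ p, F ρ p = (1 / ρ) * Real.logb 2 (1 + U * p / (I + v)))
    (ρs ps : ℝ)
    (hfeas : ps + g ρs * p₀ ≤ pmax ∧ 0 ≤ ps ∧ ρmin ≤ ρs ∧ ρs ≤ 1)
    (hopt : ∀ ρ p : ℝ, p + g ρ * p₀ ≤ pmax → 0 ≤ p → ρmin ≤ ρ → ρ ≤ 1 →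
      F ρ p ≤ F ρs ps) :
    ps + g ρs * p₀ = pmax := by
  obtain ⟨hle, hps, hρl, hρu⟩ := hfeas
  by_contra hne
  have hslack : ps + g ρs * p₀ < pmax := lt_of_le_of_ne hle hne
  have hIv : 0 < I + v := by linarith
  have hmemρs : ρs ∈ Set.Icc ρmin 1 := ⟨hρl, hρu⟩
  have hmem1 : (1 : ℝ) ∈ Set.Icc ρmin 1 := ⟨hρmin, le_refl 1⟩
  rcases lt_or_ge 0 ρs with hρpos | hρnonpos
  · -- increase p to exhaust the budget
    set p' := pmax - g ρs * p₀ with hp'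
    have hps' : ps < p' := by simp [hp']; linarith
    have hp'nonneg : 0 ≤ p' := le_of_lt (lt_of_le_of_lt hps hps')
    have hfeas' : p' + g ρs * p₀ ≤ pmax := by simp [hp']
    have hle' := hopt ρs p' hfeas' hp'nonneg hρl hρu
    rw [hF, hF] at hle'
    have harg : 1 + U * ps / (I + v) < 1 + U * p' / (I + v) := by
      gcongr
    have hpos : 0 < 1 + U * ps / (I + v) := by positivity
    have hlog : Real.logb 2 (1 + U * ps / (I + v)) <
        Real.logb 2 (1 + U * p' / (I + v)) :=
      Real.logb_lt_logb one_lt_two hpos harg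
    have h1ρ : 0 < 1 / ρs := by positivity
    nlinarith [mul_lt_mul_of_pos_left hlog h1ρ]
  · -- ρs ≤ 0 : move to ρ = 1
    have hρs1 : ρs < 1 := lt_of_le_of_lt hρnonpos one_pos
    have hg1 : g 1 < g ρs := hganti hmemρs hmem1 hρs1
    rcases eq_or_lt_of_le hps with hps0 | hpspos
    · -- ps = 0
      set p := pmax - g 1 * p₀ with hp
      have hppos : 0 < p := by
        have : g 1 * p₀ < g ρs * p₀ := by gcongr
        simp [hp]; nlinarith [hslack, hps0]
      have hfeasp : p + g 1 * p₀ ≤ pmax := by simp [hp]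
      have hle' := hopt 1 p hfeasp (le_of_lt hppos) hρmin (le_refl 1)
      rw [hF, hF] at hle'
      rw [← hps0] at hle'
      have harg : (1:ℝ) < 1 + U * p / (I + v) := by
        have : 0 < U * p / (I + v) := by positivity
        linarith
      have hlog : 0 < Real.logb 2 (1 + U * p / (I + v)) :=
        Real.logb_pos one_lt_two harg
      simp at hle'
      nlinarith [hle']
    · -- ps > 0 : compare with (1, ps)
      have hfeasp : ps + g 1 * p₀ ≤ pmax := by nlinarith
      have hle' := hopt 1 ps hfeasp hps hρmin (le_refl 1)
      rw [hF, hF] at hle'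
      have harg : (1:ℝ) < 1 + U * ps / (I + v) := by
        have : 0 < U * ps / (I + v) := by positivity
        linarith
      have hlog : 0 < Real.logb 2 (1 + U * ps / (I + v)) :=
        Real.logb_pos one_lt_two harg
      have h1ρ : 1 / ρs ≤ 0 := by
        rcases lt_or_eq_of_le hρnonpos with h | h
        · exact le_of_lt (by exact one_div_neg.mpr h)
        · simp [h]
      nlinarith [mul_nonpos_of_nonpos_of_nonneg h1ρ (le_of_lt hlog)]
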